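/- Let (Σ,σ) be a primitive Markov subshift on a countable alphabet. Suppose u : Σ → ℝ is a bounded continuous sub-action for a bounded above, coercive, continuous potential A : Σ → ℝ. If μ ∈ M_σ is an A-maximizing probability, then μ is supported in a Markov subshift on a finite alphabet, i.e. there exists I ∈ ℤ₊ with supp(μ) ⊆ Σ_I. -/

import Mathlib

open MeasureTheory Filter Topology Set

/-- Membership in the Markov shift: admissible transitions at every coordinate. -/
def InShift (M : ℕ → ℕ → Bool) (x : ℕ → ℕ) : Prop := ∀ j, M (x j) (x (j+1)) = true

/-- The one-sided countable Markov shift `Σ` associated to the transition matrix `M`,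
as a subtype of `ℕ → ℕ` (with the product topology, which is the topology induced by
the metric `d(x,y) = λ^{min{j : x_j ≠ y_j}}`). -/
abbrev ShiftSpace (M : ℕ → ℕ → Bool) := {x : ℕ → ℕ // InShift M x}

/-- The left shift map `σ`. -/
def shiftMap (M : ℕ → ℕ → Bool) (x : ShiftSpace M) : ShiftSpace M :=
  ⟨fun j => x.1 (j+1), fun j => x.2 (j+1)⟩

/-- `Agree M k x y` means the points `x, y` coincide on the first `k` coordinates;
for `k ≥ 1` this is exactly `d(x,y) ≤ λ^k` for the metric of the paper. -/
def Agree (M : ℕ → ℕ → Bool) (k : ℕ) (x y : ShiftSpace M) : Prop :=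
  ∀ j < k, x.1 j = y.1 j

/-- The sets `B_n` of symbols admitting admissible words of length `n+1` starting at them. -/
def BSet (M : ℕ → ℕ → Bool) : ℕ → Set ℕ
  | 0 => {i | ∃ j, M i j = true}
  | n+1 => {i | ∃ j ∈ BSet M n, M i j = true}

/-- `⋂_{n ≥ 0} B_n`. -/
def BInf (M : ℕ → ℕ → Bool) : Set ℕ := ⋂ n, BSet M n

/-- `M` is primitive with connecting set `F` and connection length `K₀`: any two symbols
of `⋂ B_n` can be joined by an admissible word of length `K₀` with all letters in `F`. -/
def Primitive (M : ℕ → ℕ → Bool) (F : Set ℕ) (K₀ : ℕ) : Prop :=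
  ∀ i ∈ BInf M, ∀ j ∈ BInf M, ∃ p : ℕ → ℕ,
    p 0 = i ∧ p (K₀ + 1) = j ∧ (∀ t, 1 ≤ t → t ≤ K₀ → p t ∈ F) ∧
    (∀ t ≤ K₀, M (p t) (p (t+1)) = true)

/-- `A` is locally Hölder continuous with constant `H`:
`Var_k(A) ≤ H ⬝ λ^k` for every `k ≥ 1`. -/
def LocHolder (M : ℕ → ℕ → Bool) (lam H : ℝ) (A : ShiftSpace M → ℝ) : Prop :=
  ∀ k : ℕ, 1 ≤ k → ∀ x y : ShiftSpace M, Agree M k x y → A x - A y ≤ H * lam ^ k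

/-- `A` is coercive: `sup A|_{[i]} → -∞` as `i → ∞`. -/
def Coercive (M : ℕ → ℕ → Bool) (A : ShiftSpace M → ℝ) : Prop :=
  ∀ C : ℝ, ∃ N : ℕ, ∀ i : ℕ, N ≤ i → ∀ x : ShiftSpace M, x.1 0 = i → A x ≤ C

/-- The union of cylinders `⋃_{i ∈ F} [i]`. -/
def FCyl (M : ℕ → ℕ → Bool) (F : Set ℕ) : Set (ShiftSpace M) := {x | x.1 0 ∈ F}

/-- `μ` is a `σ`-invariant Borel probability measure. -/
def InvProb (M : ℕ → ℕ → Bool) (μ : Measure (ShiftSpace M)) : Prop :=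
  IsProbabilityMeasure μ ∧ μ.map (shiftMap M) = μ

/-- The ergodic maximizing value `β_A = sup {∫ A dμ : μ ∈ M_σ}`. -/
noncomputable def betaA (M : ℕ → ℕ → Bool) (A : ShiftSpace M → ℝ) : ℝ :=
  sSup {r | ∃ μ : Measure (ShiftSpace M), InvProb M μ ∧ Integrable A μ ∧ ∫ x, A x ∂μ = r}

/-- The compact subshift `Σ_I` on the finite alphabet `{0, …, I}`. -/
def SpaceI (M : ℕ → ℕ → Bool) (I : ℕ) : Set (ShiftSpace M) := {x | ∀ j, x.1 j ≤ I}

/-- `β_A(I) = max {∫ A dμ : μ ∈ M_σ, supp μ ⊆ Σ_I}`. -/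
noncomputable def betaAI (M : ℕ → ℕ → Bool) (A : ShiftSpace M → ℝ) (I : ℕ) : ℝ :=
  sSup {r | ∃ μ : Measure (ShiftSpace M), InvProb M μ ∧ μ (SpaceI M I) = 1 ∧
    Integrable A μ ∧ ∫ x, A x ∂μ = r}

/-- Birkhoff sum `S_k A`. -/
noncomputable def birkhoff (M : ℕ → ℕ → Bool) (A : ShiftSpace M → ℝ) (k : ℕ)
    (x : ShiftSpace M) : ℝ :=
  ∑ j ∈ Finset.range k, A ((shiftMap M)^[j] x)

/-- The `k`-th variation `Var_k(A)`. -/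
noncomputable def VarK (M : ℕ → ℕ → Bool) (A : ShiftSpace M → ℝ) (k : ℕ) : ℝ :=
  sSup {r | ∃ x y : ShiftSpace M, Agree M k x y ∧ A x - A y = r}

/-- `Var(A) = ∑_{k ≥ 1} Var_k(A)`. -/
noncomputable def VarSum (M : ℕ → ℕ → Bool) (A : ShiftSpace M → ℝ) : ℝ :=
  ∑' k : ℕ, VarK M A (k + 1)

/-- `sup A`. -/
noncomputable def supA (M : ℕ → ℕ → Bool) (A : ShiftSpace M → ℝ) : ℝ :=
  sSup (Set.range A)

/-- `inf A|_{⋃_{i ∈ F} [i]}`. -/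
noncomputable def infF (M : ℕ → ℕ → Bool) (F : Set ℕ) (A : ShiftSpace M → ℝ) : ℝ :=
  sInf (A '' FCyl M F)

/-- The defining set for `u_A(x)`: all values `S_k(A - β_A)(y)` with `σ^k(y) = x`. -/
noncomputable def uASet (M : ℕ → ℕ → Bool) (A : ShiftSpace M → ℝ) (x : ShiftSpace M) :
    Set ℝ :=
  {r | ∃ (k : ℕ) (y : ShiftSpace M), (shiftMap M)^[k] y = x ∧
    birkhoff M A k y - k * betaA M A = r}

/-- The candidate minimal sub-action
`u_A(x) = sup {S_k(A - β_A)(y) : k ≥ 0, σ^k(y) = x}`. -/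
noncomputable def uA (M : ℕ → ℕ → Bool) (A : ShiftSpace M → ℝ) (x : ShiftSpace M) : ℝ :=
  sSup (uASet M A x)

/-- The non-wandering set `Ω(A, I)` with respect to `A|_{Σ_I}`. -/
def NonWandering (M : ℕ → ℕ → Bool) (A : ShiftSpace M → ℝ) (I : ℕ) :
    Set (ShiftSpace M) :=
  {x | x ∈ SpaceI M I ∧ ∀ ε : ℝ, 0 < ε → ∀ m : ℕ,
    ∃ y ∈ SpaceI M I, ∃ n : ℕ, 1 ≤ n ∧ Agree M m x y ∧
      Agree M m x ((shiftMap M)^[n] y) ∧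
      |birkhoff M A n y - n * betaAI M A I| < ε}

instance ShiftSpace.opensMeasurableSpace (M : ℕ → ℕ → Bool) :
    OpensMeasurableSpace (ShiftSpace M) :=
  inferInstanceAs (OpensMeasurableSpace {x : ℕ → ℕ | InShift M x})

lemma measurable_coord (M : ℕ → ℕ → Bool) (j : ℕ) :
    Measurable (fun x : ShiftSpace M => x.1 j) :=
  (measurable_pi_apply j).comp measurable_subtype_coe

lemma measurable_shiftMap (M : ℕ → ℕ → Bool) : Measurable (shiftMap M) := by
  apply Measurable.subtype_mk
  exact measurable_pi_iff.2 fun j => measurable_coord M (j+1)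

lemma shift_iter_coord (M : ℕ → ℕ → Bool) (j : ℕ) (x : ShiftSpace M) (i : ℕ) :
    ((shiftMap M)^[j] x).1 i = x.1 (i + j) := by
  induction j generalizing x with
  | zero => rfl
  | succ j ih =>
    rw [Function.iterate_succ_apply, ih]
    show x.1 (i + j + 1) = x.1 (i + (j+1))
    ring_nf

/-- if `u` is a bounded continuous sub-action for a bounded above, coercive,
continuous potential `A`, then any `A`-maximizing probability is supported in some
Markov subshift `Σ_I` on a finite alphabet. -/
theorem maximizing_supported_in_finite_alphabet
    (M : ℕ → ℕ → Bool) (F : Set ℕ) (K₀ : ℕ)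
    (hprim : Primitive M F K₀)
    (A : ShiftSpace M → ℝ) (hA : Continuous A)
    (hbdd : BddAbove (Set.range A)) (hcoer : Coercive M A)
    (u : ShiftSpace M → ℝ) (hu : Continuous u) (hubdd : ∃ C : ℝ, ∀ x, |u x| ≤ C)
    (hsub : ∀ x, A x + u x - u (shiftMap M x) ≤ betaA M A)
    (μ : Measure (ShiftSpace M)) (hμ : InvProb M μ)
    (hint : Integrable A μ) (hmax : ∫ x, A x ∂μ = betaA M A) :
    ∃ I : ℕ, μ (SpaceI M I) = 1 := by
  obtain ⟨hprob, hinv⟩ := hμ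
  haveI := hprob
  obtain ⟨Cu, hCu⟩ := hubdd
  set β := betaA M A with hβ
  have mσ := measurable_shiftMap M
  have hui : Integrable u μ :=
    ⟨hu.aestronglyMeasurable, HasFiniteIntegral.of_bounded (C := Cu) (ae_of_all _ hCu)⟩
  have husi : Integrable (fun x => u (shiftMap M x)) μ :=
    ⟨(hu.measurable.comp mσ).aestronglyMeasurable,
      HasFiniteIntegral.of_bounded (C := Cu) (ae_of_all _ fun x => hCu _)⟩
  have hintσ : ∫ x, u (shiftMap M x) ∂μ = ∫ x, u x ∂μ := by
    conv_rhs => rw [← hinv]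
    rw [integral_map mσ.aemeasurable hu.aestronglyMeasurable]
  set f : ShiftSpace M → ℝ := fun x => β - (A x + u x - u (shiftMap M x)) with hf
  have hf0 : ∀ x, 0 ≤ f x := fun x => by simp only [hf]; linarith [hsub x]
  have hiAu : Integrable (fun x => A x + u x) μ := hint.add hui
  have hiAus : Integrable (fun x => A x + u x - u (shiftMap M x)) μ := hiAu.sub husi
  have hfint : Integrable f μ := (integrable_const β).sub hiAus
  have hfzero : ∫ x, f x ∂μ = 0 := by
    show ∫ x, (β - (A x + u x - u (shiftMap M x))) ∂μ = 0
    rw [integral_sub (integrable_const β) hiAus, integral_sub hiAu husi,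
      integral_add hint hui, integral_const]
    simp only [probReal_univ, smul_eq_mul, one_mul]
    rw [hintσ, hmax]; ring
  have hae : ∀ᵐ x ∂μ, f x = 0 :=
    ((integral_eq_zero_iff_of_nonneg hf0 hfint).1 hfzero).mono (fun x hx => by
      simpa using hx)
  obtain ⟨N, hN⟩ := hcoer (β - 2*|Cu| - 1)
  have haeN : ∀ᵐ x ∂μ, x.1 0 ≤ N := by
    filter_upwards [hae] with x hx
    by_contra h
    push_neg at h
    have h1 : A x ≤ β - 2*|Cu| - 1 := hN (x.1 0) (le_of_lt h) x rfl
    have h2 : |u x| ≤ |Cu| := (hCu x).trans (le_abs_self Cu)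
    have h3 : |u (shiftMap M x)| ≤ |Cu| := (hCu _).trans (le_abs_self Cu)
    have h4 : A x + u x - u (shiftMap M x) = β := by
      simp only [hf] at hx; linarith
    rw [abs_le] at h2 h3
    linarith
  have hmT : ∀ j : ℕ, MeasurableSet {x : ShiftSpace M | x.1 j ≤ N} :=
    fun j => measurableSet_le (measurable_coord M j) measurable_const
  have hT0 : μ {x : ShiftSpace M | x.1 0 ≤ N}ᶜ = 0 := by
    rw [Set.compl_setOf]
    exact ae_iff.mp haeN
  have hmapj : ∀ j : ℕ, μ.map ((shiftMap M)^[j]) = μ := by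
    intro j
    induction j with
    | zero => simp
    | succ j ih =>
      rw [Function.iterate_succ, ← Measure.map_map (mσ.iterate j) mσ, hinv, ih]
  have hTj : ∀ j : ℕ, μ {x : ShiftSpace M | x.1 j ≤ N}ᶜ = 0 := by
    intro j
    have hpre : {x : ShiftSpace M | x.1 j ≤ N}ᶜ
        = (shiftMap M)^[j] ⁻¹' ({x : ShiftSpace M | x.1 0 ≤ N}ᶜ) := by
      ext x
      simp [Set.mem_preimage, shift_iter_coord]
    rw [hpre, ← Measure.map_apply (mσ.iterate j) (hmT 0).compl, hmapj j, hT0]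
  refine ⟨N, ?_⟩
  have hSI : SpaceI M N = ⋂ j, {x : ShiftSpace M | x.1 j ≤ N} := by
    ext x; simp [SpaceI]
  rw [hSI]
  have hcompl : μ (⋂ j, {x : ShiftSpace M | x.1 j ≤ N})ᶜ = 0 := by
    rw [Set.compl_iInter]
    exact measure_iUnion_null hTj
  exact (prob_compl_eq_zero_iff (MeasurableSet.iInter hmT)).mp hcompl
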